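/- In the classical realisation on ℝ⁶, the three Poisson brackets {C_{12}, C_{23}}, {C_{23}, C_{13}}, and {C_{13}, C_{12}} are all equal; their common value divided by 2 defines the generator F. -/

import Mathlib

open Finset

/-- Canonical Poisson bracket on the phase space ℝ²ⁿ. -/
noncomputable def pb (n : ℕ) (f g : (Fin n → ℝ) → (Fin n → ℝ) → ℝ)
    (x p : Fin n → ℝ) : ℝ :=
  ∑ j, (deriv (fun t => f (Function.update x j t) p) (x j) *
        deriv (fun t => g x (Function.update p j t)) (p j) -
        deriv (fun t => f x (Function.update p j t)) (p j) *
        deriv (fun t => g (Function.update x j t) p) (x j))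

/-- The two-index Racah generator `C_{ij}` in the classical realisation. -/
noncomputable def Cij (n : ℕ) (a : Fin n → ℝ) (i j : Fin n)
    (x p : Fin n → ℝ) : ℝ :=
  -(1 / 4) * ((x i * p j - x j * p i) ^ 2 + a i * (x j) ^ 2 / (x i) ^ 2 +
    a j * (x i) ^ 2 / (x j) ^ 2 + a i + a j)

lemma d2 (A B t : ℝ) :
    deriv (fun y : ℝ => (A - B * y) ^ 2) t = 2 * (A - B * t) * (-B) := by
  have h : HasDerivAt (fun y : ℝ => (A - B * y) ^ 2)
      (2 * (A - B * t) ^ 1 * -(B * 1)) t :=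
    (((hasDerivAt_id t).const_mul B).const_sub A).pow 2
  rw [h.deriv]; ring

lemma d3 (A B t : ℝ) :
    deriv (fun y : ℝ => (A * y - B) ^ 2) t = 2 * (A * t - B) * A := by
  have h : HasDerivAt (fun y : ℝ => (A * y - B) ^ 2)
      (2 * (A * t - B) ^ 1 * (A * 1)) t :=
    (((hasDerivAt_id t).const_mul A).sub_const B).pow 2
  rw [h.deriv]; ring

lemma d1 (A B C D E t : ℝ) (ht : t ≠ 0) :
    deriv (fun y : ℝ => (A - y * B) ^ 2 + C * y ^ 2 / D + E / y ^ 2) t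
      = 2 * (A - t * B) * (-B) + 2 * C * t / D - 2 * E / t ^ 3 := by
  have h1 : HasDerivAt (fun y : ℝ => (A - y * B) ^ 2)
      (2 * (A - t * B) ^ 1 * -(1 * B)) t :=
    (((hasDerivAt_id t).mul_const B).const_sub A).pow 2
  have h2 : HasDerivAt (fun y : ℝ => C * y ^ 2 / D)
      (C * (2 * t ^ 1) / D) t := by
    simpa using ((hasDerivAt_pow 2 t).const_mul C).div_const D
  have h3 : HasDerivAt (fun y : ℝ => E / y ^ 2)
      (E * (-(2 * t ^ 1) / (t ^ 2) ^ 2)) t := by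
    have := ((hasDerivAt_pow 2 t).inv (pow_ne_zero 2 ht)).const_mul E
    simpa [div_eq_mul_inv] using this
  have h : HasDerivAt (fun y : ℝ => (A - y * B) ^ 2 + C * y ^ 2 / D + E / y ^ 2) _ t :=
    (h1.add h2).add h3
  rw [h.deriv]; field_simp; ring

lemma d4 (A B C D E t : ℝ) (ht : t ≠ 0) :
    deriv (fun y : ℝ => (y * A - B) ^ 2 + C / y ^ 2 + D * y ^ 2 / E) t
      = 2 * (t * A - B) * A + D * 2 * t / E - 2 * C / t ^ 3 := by
  have h1 : HasDerivAt (fun y : ℝ => (y * A - B) ^ 2)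
      (2 * (t * A - B) ^ 1 * (1 * A)) t :=
    (((hasDerivAt_id t).mul_const A).sub_const B).pow 2
  have h2 : HasDerivAt (fun y : ℝ => C / y ^ 2)
      (C * (-(2 * t ^ 1) / (t ^ 2) ^ 2)) t := by
    have := ((hasDerivAt_pow 2 t).inv (pow_ne_zero 2 ht)).const_mul C
    simpa [div_eq_mul_inv] using this
  have h3 : HasDerivAt (fun y : ℝ => D * y ^ 2 / E)
      (D * (2 * t ^ 1) / E) t := by
    simpa using ((hasDerivAt_pow 2 t).const_mul D).div_const E
  have h : HasDerivAt (fun y : ℝ => (y * A - B) ^ 2 + C / y ^ 2 + D * y ^ 2 / E) _ t :=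
    (h1.add h2).add h3
  rw [h.deriv]; field_simp; ring

set_option maxHeartbeats 4000000 in
lemma stmt10_left (a : Fin 3 → ℝ) (x p : Fin 3 → ℝ) (hx : ∀ i, x i ≠ 0) :
    pb 3 (Cij 3 a 0 1) (Cij 3 a 1 2) x p = pb 3 (Cij 3 a 1 2) (Cij 3 a 0 2) x p := by
  simp only [pb, Cij, Fin.sum_univ_three]
  simp only [Function.update_apply, Fin.ext_iff, show ((0:Fin 3):ℕ)=0 from rfl,
    show ((1:Fin 3):ℕ)=1 from rfl, show ((2:Fin 3):ℕ)=2 from rfl]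
  norm_num
  simp only [d2, d3, d1 (t := x 0) (ht := hx 0), d1 (t := x 1) (ht := hx 1),
    d1 (t := x 2) (ht := hx 2), d4 (t := x 0) (ht := hx 0),
    d4 (t := x 1) (ht := hx 1), d4 (t := x 2) (ht := hx 2)]
  field_simp [hx 0, hx 1, hx 2]
  ring

set_option maxHeartbeats 4000000 in
lemma stmt10_right (a : Fin 3 → ℝ) (x p : Fin 3 → ℝ) (hx : ∀ i, x i ≠ 0) :
    pb 3 (Cij 3 a 1 2) (Cij 3 a 0 2) x p = pb 3 (Cij 3 a 0 2) (Cij 3 a 0 1) x p := by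
  simp only [pb, Cij, Fin.sum_univ_three]
  simp only [Function.update_apply, Fin.ext_iff, show ((0:Fin 3):ℕ)=0 from rfl,
    show ((1:Fin 3):ℕ)=1 from rfl, show ((2:Fin 3):ℕ)=2 from rfl]
  norm_num
  simp only [d2, d3, d1 (t := x 0) (ht := hx 0), d1 (t := x 1) (ht := hx 1),
    d1 (t := x 2) (ht := hx 2), d4 (t := x 0) (ht := hx 0),
    d4 (t := x 1) (ht := hx 1), d4 (t := x 2) (ht := hx 2)]
  field_simp [hx 0, hx 1, hx 2]
  ring

theorem stmt10 (a : Fin 3 → ℝ) (x p : Fin 3 → ℝ) (hx : ∀ i, x i ≠ 0) :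
    pb 3 (Cij 3 a 0 1) (Cij 3 a 1 2) x p = pb 3 (Cij 3 a 1 2) (Cij 3 a 0 2) x p ∧
    pb 3 (Cij 3 a 1 2) (Cij 3 a 0 2) x p = pb 3 (Cij 3 a 0 2) (Cij 3 a 0 1) x p :=
  ⟨stmt10_left a x p hx, stmt10_right a x p hx⟩
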